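/- Let C₁ and C₂ be categories whose morphisms are all mono, such that all hom-sets in each Cᵢ are finite and every object of each Cᵢ has finite Ramsey degree. Then for all objects A₁ of C₁ and A₂ of C₂, the Ramsey degree of (A₁,A₂) in the product category C₁ × C₂ satisfies t_{C₁×C₂}(A₁,A₂) ≤ t_{C₁}(A₁) · t_{C₂}(A₂). -/

import Mathlib

open CategoryTheory

universe v u v' u'

def RamseyArrow (C : Type u) [Category.{v} C] (A B Z : C) (k t : ℕ) : Prop :=
  ∀ χ : (A ⟶ Z) → Fin k, ∃ w : B ⟶ Z,
    (Set.range fun f : A ⟶ B => χ (f ≫ w)).ncard ≤ t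

noncomputable def ramseyDeg (C : Type u) [Category.{v} C] (A : C) : ℕ∞ :=
  sInf {n : ℕ∞ | ∃ m : ℕ, n = (m : ℕ∞) ∧ 1 ≤ m ∧
    ∀ k : ℕ, 2 ≤ k → ∀ B : C, ∃ Z : C, RamseyArrow C A B Z k m}

lemma prodArrow {C₁ : Type u} [Category.{v} C₁] {C₂ : Type u'} [Category.{v'} C₂]
    (hfin₁ : ∀ X Y : C₁, Finite (X ⟶ Y)) (hfin₂ : ∀ X Y : C₂, Finite (X ⟶ Y))
    (A₁ B₁ : C₁) (A₂ B₂ : C₂) (k m₁ m₂ : ℕ) (hk : 2 ≤ k)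
    (P₁ : ∀ k : ℕ, 2 ≤ k → ∀ B : C₁, ∃ Z : C₁, RamseyArrow C₁ A₁ B Z k m₁)
    (P₂ : ∀ k : ℕ, 2 ≤ k → ∀ B : C₂, ∃ Z : C₂, RamseyArrow C₂ A₂ B Z k m₂) :
    ∃ Z : C₁ × C₂, RamseyArrow (C₁ × C₂) (A₁, A₂) (B₁, B₂) Z k (m₁ * m₂) := by
  classical
  haveI : Inhabited (Fin k) := ⟨⟨0, by omega⟩⟩
  haveI : Fintype (A₁ ⟶ B₁) := @Fintype.ofFinite _ (hfin₁ A₁ B₁)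
  haveI : Fintype ((A₁ ⟶ B₁) → Fin k) := Pi.instFintype
  set K₂ : ℕ := max 2 (Fintype.card ((A₁ ⟶ B₁) → Fin k)) with hK₂
  obtain ⟨Z₂, hZ₂⟩ := P₂ K₂ (le_max_left _ _) B₂
  haveI : Fintype (A₂ ⟶ Z₂) := @Fintype.ofFinite _ (hfin₂ A₂ Z₂)
  haveI : Fintype ((A₂ ⟶ Z₂) → Fin k) := Pi.instFintype
  set K₁ : ℕ := max 2 (Fintype.card ((A₂ ⟶ Z₂) → Fin k)) with hK₁
  obtain ⟨Z₁, hZ₁⟩ := P₁ K₁ (le_max_left _ _) B₁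
  refine ⟨(Z₁, Z₂), ?_⟩
  intro χ
  -- embeddings of function spaces into Fin Kᵢ
  let e₁ : ((A₂ ⟶ Z₂) → Fin k) ↪ Fin K₁ :=
    (Fintype.equivFin _).toEmbedding.trans (Fin.castLEEmb (le_max_right _ _))
  let e₂ : ((A₁ ⟶ B₁) → Fin k) ↪ Fin K₂ :=
    (Fintype.equivFin _).toEmbedding.trans (Fin.castLEEmb (le_max_right _ _))
  -- first coloring
  let χ₁ : (A₁ ⟶ Z₁) → Fin K₁ := fun h => e₁ (fun g => χ (h, g))
  obtain ⟨w₁, hw₁⟩ := hZ₁ χ₁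
  -- second coloring
  let χ₂ : (A₂ ⟶ Z₂) → Fin K₂ := fun g => e₂ (fun f : A₁ ⟶ B₁ => χ (f ≫ w₁, g))
  obtain ⟨w₂, hw₂⟩ := hZ₂ χ₂
  refine ⟨(w₁, w₂), ?_⟩
  -- the function-valued traces
  let φ : (A₁ ⟶ B₁) → ((A₂ ⟶ Z₂) → Fin k) := fun f => fun g => χ (f ≫ w₁, g)
  let ψ : (A₂ ⟶ B₂) → ((A₁ ⟶ B₁) → Fin k) := fun g => fun f => χ (f ≫ w₁, g ≫ w₂)
  have hT₁ : (Set.range fun f : A₁ ⟶ B₁ => φ f).ncard ≤ m₁ := by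
    have himg : (Set.range fun f : A₁ ⟶ B₁ => χ₁ (f ≫ w₁)) =
        e₁ '' (Set.range fun f : A₁ ⟶ B₁ => φ f) := by
      rw [← Set.range_comp]; rfl
    have := hw₁
    rw [himg, Set.ncard_image_of_injective _ e₁.injective] at this
    exact this
  have hT₂ : (Set.range fun g : A₂ ⟶ B₂ => ψ g).ncard ≤ m₂ := by
    have himg : (Set.range fun g : A₂ ⟶ B₂ => χ₂ (g ≫ w₂)) =
        e₂ '' (Set.range fun g : A₂ ⟶ B₂ => ψ g) := by
      rw [← Set.range_comp]; rfl
    have := hw₂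
    rw [himg, Set.ncard_image_of_injective _ e₂.injective] at this
    exact this
  -- key determination lemma
  have key : ∀ (f f' : A₁ ⟶ B₁) (g g' : A₂ ⟶ B₂), φ f = φ f' → ψ g = ψ g' →
      χ (f ≫ w₁, g ≫ w₂) = χ (f' ≫ w₁, g' ≫ w₂) := by
    intro f f' g g' hφ hψ
    have h1 : χ (f ≫ w₁, g ≫ w₂) = χ (f' ≫ w₁, g ≫ w₂) := congrFun hφ (g ≫ w₂)
    have h2 : χ (f' ≫ w₁, g ≫ w₂) = χ (f' ≫ w₁, g' ≫ w₂) := congrFun hψ f'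
    rw [h1, h2]
  -- pair map
  let pm : ((A₁, A₂) ⟶ (B₁, B₂) : Type _) → ((A₂ ⟶ Z₂) → Fin k) × ((A₁ ⟶ B₁) → Fin k) :=
    fun p => (φ p.1, ψ p.2)
  -- the combined coloring factors through pm
  let q : ((A₂ ⟶ Z₂) → Fin k) × ((A₁ ⟶ B₁) → Fin k) → Fin k := fun s =>
    if h : ∃ p : ((A₁, A₂) ⟶ (B₁, B₂) : Type _), pm p = s then
      χ (h.choose ≫ (w₁, w₂)) else default
  have hfac : ∀ p : ((A₁, A₂) ⟶ (B₁, B₂) : Type _), χ (p ≫ (w₁, w₂)) = q (pm p) := by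
    intro p
    have hex : ∃ p' : ((A₁, A₂) ⟶ (B₁, B₂) : Type _), pm p' = pm p := ⟨p, rfl⟩
    simp only [q, dif_pos hex]
    have hspec := hex.choose_spec
    have h1 : φ hex.choose.1 = φ p.1 := congrArg Prod.fst hspec
    have h2 : ψ hex.choose.2 = ψ p.2 := congrArg Prod.snd hspec
    exact (key _ _ _ _ h1 h2).symm
  have hrange : (Set.range fun p : ((A₁, A₂) ⟶ (B₁, B₂) : Type _) => χ (p ≫ (w₁, w₂)))
      = q '' (Set.range pm) := by
    have heq : (fun p : ((A₁, A₂) ⟶ (B₁, B₂) : Type _) => χ (p ≫ (w₁, w₂))) = q ∘ pm :=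
      funext hfac
    rw [heq, Set.range_comp]
  rw [hrange]
  have hfin : (Set.range pm).Finite := Set.toFinite _
  calc (q '' Set.range pm).ncard ≤ (Set.range pm).ncard := Set.ncard_image_le hfin
    _ ≤ ((Set.range fun f : A₁ ⟶ B₁ => φ f) ×ˢ (Set.range fun g : A₂ ⟶ B₂ => ψ g)).ncard := by
        apply Set.ncard_le_ncard
        · rintro s ⟨p, rfl⟩
          exact ⟨⟨p.1, rfl⟩, ⟨p.2, rfl⟩⟩
        · exact Set.toFinite _
    _ = (Set.range fun f : A₁ ⟶ B₁ => φ f).ncard * (Set.range fun g : A₂ ⟶ B₂ => ψ g).ncard := by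
        rw [← Nat.card_coe_set_eq, ← Nat.card_coe_set_eq, ← Nat.card_coe_set_eq,
          Nat.card_congr (Equiv.Set.prod _ _), Nat.card_prod]
    _ ≤ m₁ * m₂ := Nat.mul_le_mul hT₁ hT₂

lemma enat_sInf_mem {S : Set ℕ∞} (h : sInf S ≠ ⊤) : sInf S ∈ S := by
  have hne : S.Nonempty := by
    by_contra hS
    rw [Set.not_nonempty_iff_eq_empty] at hS
    simp [hS] at h
  obtain ⟨m, hm, hmin⟩ := IsWellFounded.wf.has_min (r := (· < · : ℕ∞ → ℕ∞ → Prop)) S hne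
  have : sInf S = m := le_antisymm (sInf_le hm) (le_sInf fun x hx => not_lt.1 (hmin x hx))
  rw [this]; exact hm

theorem stmt2 {C₁ : Type u} [Category.{v} C₁] {C₂ : Type u'} [Category.{v'} C₂]
    (hmono₁ : ∀ {X Y : C₁} (f : X ⟶ Y), Mono f)
    (hmono₂ : ∀ {X Y : C₂} (f : X ⟶ Y), Mono f)
    (hfin₁ : ∀ X Y : C₁, Finite (X ⟶ Y)) (hfin₂ : ∀ X Y : C₂, Finite (X ⟶ Y))
    (hdeg₁ : ∀ X : C₁, ramseyDeg C₁ X ≠ ⊤) (hdeg₂ : ∀ X : C₂, ramseyDeg C₂ X ≠ ⊤)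
    (A₁ : C₁) (A₂ : C₂) :
    ramseyDeg (C₁ × C₂) (A₁, A₂) ≤ ramseyDeg C₁ A₁ * ramseyDeg C₂ A₂ := by
  obtain ⟨m₁, hm₁, hm₁1, P₁⟩ := enat_sInf_mem (hdeg₁ A₁)
  obtain ⟨m₂, hm₂, hm₂1, P₂⟩ := enat_sInf_mem (hdeg₂ A₂)
  have h1 : ramseyDeg C₁ A₁ = (m₁ : ℕ∞) := hm₁
  have h2 : ramseyDeg C₂ A₂ = (m₂ : ℕ∞) := hm₂
  rw [h1, h2, ← Nat.cast_mul]
  apply sInf_le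
  refine ⟨m₁ * m₂, rfl, Nat.one_le_iff_ne_zero.2 (by positivity), ?_⟩
  intro k hk B
  exact prodArrow hfin₁ hfin₂ A₁ B.1 A₂ B.2 k m₁ m₂ hk P₁ P₂
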